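/- (Nonexistence at the critical uncertainty level, Example 4) Consider the set S = {(w₁, w₂) ∈ ℝ² : w₁ + 2w₂ ≥ 2·√(w₁² + w₂²) + 1}. Then S is nonempty (e.g. (2,4) ∈ S), every (w₁, w₂) ∈ S satisfies w₁ > 1, for every δ > 0 there exists (w₁, w₂) ∈ S with w₁ = 1 + δ, and consequently the infimum of w₁² over S equals 1 but is not attained. -/

import Mathlib

lemma sqrt_le_of_sq {a b : ℝ} (hb : 0 ≤ b) (h : a ≤ b ^ 2) : Real.sqrt a ≤ b := by
  calc Real.sqrt a ≤ Real.sqrt (b ^ 2) := Real.sqrt_le_sqrt h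
  _ = b := by rw [Real.sqrt_sq hb]

lemma mem_gt_one (p : ℝ × ℝ)
    (hp : 2 * Real.sqrt (p.1 ^ 2 + p.2 ^ 2) + 1 ≤ p.1 + 2 * p.2) : 1 < p.1 := by
  obtain ⟨x, y⟩ := p
  simp only at hp ⊢
  have hs : |y| ≤ Real.sqrt (x ^ 2 + y ^ 2) := by
    rw [← Real.sqrt_sq_eq_abs]
    exact Real.sqrt_le_sqrt (by nlinarith [sq_nonneg x])
  have hx1 : 1 ≤ x := by nlinarith [abs_nonneg y, le_abs_self y]
  have h2 : |y| < Real.sqrt (x ^ 2 + y ^ 2) := by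
    rw [← Real.sqrt_sq_eq_abs]
    apply Real.sqrt_lt_sqrt (sq_nonneg y)
    nlinarith
  nlinarith [le_abs_self y]

lemma realized (δ : ℝ) (hδ : 0 < δ) :
    2 * Real.sqrt ((1 + δ) ^ 2 + ((1 + δ) ^ 2 / δ) ^ 2) + 1 ≤ (1 + δ) + 2 * ((1 + δ) ^ 2 / δ) := by
  set y : ℝ := (1 + δ) ^ 2 / δ with hy
  have hyd : y * δ = (1 + δ) ^ 2 := by rw [hy, div_mul_cancel₀ _ hδ.ne']
  have hypos : 0 < y := by positivity
  have key : Real.sqrt ((1 + δ) ^ 2 + y ^ 2) ≤ (δ + 2 * y) / 2 := by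
    apply sqrt_le_of_sq (by positivity)
    have : ((δ + 2 * y) / 2) ^ 2 = (1 + δ) ^ 2 + y ^ 2 + δ ^ 2 / 4 := by
      field_simp
      nlinarith [hyd]
    nlinarith [sq_nonneg δ]
  linarith

/-- nonexistence at the critical uncertainty level, Example 4:
for `S = {(w₁,w₂) : w₁ + 2w₂ ≥ 2√(w₁²+w₂²) + 1}`, `(2,4) ∈ S`, every point of
`S` has `w₁ > 1`, every `w₁ = 1 + δ` with `δ > 0` is realized in `S`, and the
infimum of `w₁²` over `S` is `1` but is not attained. -/
theorem rab_example_nonexistence :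
    ((2 : ℝ), (4 : ℝ)) ∈
      {p : ℝ × ℝ | 2 * Real.sqrt (p.1 ^ 2 + p.2 ^ 2) + 1 ≤ p.1 + 2 * p.2} ∧
    (∀ p : ℝ × ℝ,
      p ∈ {p : ℝ × ℝ | 2 * Real.sqrt (p.1 ^ 2 + p.2 ^ 2) + 1 ≤ p.1 + 2 * p.2} →
      1 < p.1) ∧
    (∀ δ : ℝ, 0 < δ → ∃ p : ℝ × ℝ,
      p ∈ {p : ℝ × ℝ | 2 * Real.sqrt (p.1 ^ 2 + p.2 ^ 2) + 1 ≤ p.1 + 2 * p.2} ∧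
      p.1 = 1 + δ) ∧
    IsGLB ((fun p : ℝ × ℝ => p.1 ^ 2) ''
      {p : ℝ × ℝ | 2 * Real.sqrt (p.1 ^ 2 + p.2 ^ 2) + 1 ≤ p.1 + 2 * p.2}) 1 ∧
    ¬ ∃ p : ℝ × ℝ,
      p ∈ {p : ℝ × ℝ | 2 * Real.sqrt (p.1 ^ 2 + p.2 ^ 2) + 1 ≤ p.1 + 2 * p.2} ∧
      p.1 ^ 2 = 1 := by
  refine ⟨?_, fun p hp => mem_gt_one p hp, ?_, ⟨?_, ?_⟩, ?_⟩
  · have h : Real.sqrt (20:ℝ) ≤ 9 / 2 :=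
      sqrt_le_of_sq (by norm_num) (by norm_num)
    simp only [Set.mem_setOf_eq]
    norm_num
    linarith
  · intro δ hδ
    exact ⟨(1 + δ, (1 + δ) ^ 2 / δ), realized δ hδ, rfl⟩
  · rintro x ⟨p, hp, rfl⟩
    have := mem_gt_one p hp
    simp only
    nlinarith
  · intro b hb
    by_contra hb1
    push_neg at hb1
    set δ : ℝ := min 1 ((b - 1) / 4) with hδdef
    have hδ : 0 < δ := lt_min one_pos (by linarith)
    have hble : b ≤ (1 + δ) ^ 2 :=
      hb ⟨(1 + δ, (1 + δ) ^ 2 / δ), realized δ hδ, rfl⟩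
    have h1 : δ ≤ 1 := min_le_left _ _
    have h2 : δ ≤ (b - 1) / 4 := min_le_right _ _
    nlinarith
  · rintro ⟨p, hp, h1⟩
    have := mem_gt_one p hp
    nlinarith
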